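/- Let p ≥ 2, α > 0 and z ∈ ℝ^N. Then the Hessian ∇²Q_p(z) is a diagonal positive-definite matrix whose condition number κ (largest eigenvalue divided by smallest eigenvalue) satisfies κ(∇²Q_p(z)) ≤ (1/2)(‖z‖_∞/α^p + 2)^{(2p−2)/p}. -/

import Mathlib

noncomputable section

/-- The Euclidean (ℓ²) norm of a vector in ℝⁿ. -/
def norm2 {n : ℕ} (v : Fin n → ℝ) : ℝ := Real.sqrt (∑ i, v i ^ 2)

/-- The ℓ¹ norm of a vector in ℝⁿ. -/
def norm1 {n : ℕ} (v : Fin n → ℝ) : ℝ := ∑ i, |v i|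

/-- The sup (ℓ^∞) norm of a vector in ℝⁿ. -/
def normInf {n : ℕ} (v : Fin n → ℝ) : ℝ := ⨆ i, |v i|

/-- The ℓʳ (quasi-)norm ‖v‖_r = (∑ |v i|^r)^(1/r). -/
def normr {n : ℕ} (r : ℝ) (v : Fin n → ℝ) : ℝ := (∑ i, |v i| ^ r) ^ (1 / r)

/-- The smallest singular value of `A`, via `σ_min(A) = inf {‖Aᵀ z‖₂ : ‖z‖₂ = 1}`. -/
def sigmaMin {m N : ℕ} (A : Matrix (Fin m) (Fin N) ℝ) : ℝ :=
  sInf {c : ℝ | ∃ z : Fin m → ℝ, norm2 z = 1 ∧ c = norm2 (A.transpose.mulVec z)}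

/-- The entropy H(z) = −∑ |z i| ln |z i| (with the convention 0 · ln 0 = 0,
which holds automatically since `Real.log 0 = 0`). -/
def Hent {n : ℕ} (z : Fin n → ℝ) : ℝ := -∑ i, |z i| * Real.log |z i|

/-- The set 𝒰(A,y) of basis-pursuit minimizers: minimizers of ‖·‖₁ subject to Az = y. -/
def BPset {m N : ℕ} (A : Matrix (Fin m) (Fin N) ℝ) (y : Fin m → ℝ) : Set (Fin N → ℝ) :=
  {z | A.mulVec z = y ∧ ∀ w : Fin N → ℝ, A.mulVec w = y → norm1 z ≤ norm1 w}

/-- The basis-pursuit minimum value R(A,y) = min {‖z‖₁ : Az = y}. -/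
def Rmin {m N : ℕ} (A : Matrix (Fin m) (Fin N) ℝ) (y : Fin m → ℝ) : ℝ :=
  sInf (norm1 '' {z : Fin N → ℝ | A.mulVec z = y})

/-- The function h_p: h₂(t) = 2 sinh t, and for p > 2,
h_p(t) = (1−t)^{−p/(p−2)} − (1+t)^{−p/(p−2)}. -/
def hfun (p t : ℝ) : ℝ :=
  if p = 2 then 2 * Real.sinh t
  else (1 - t) ^ (-(p / (p - 2))) - (1 + t) ^ (-(p / (p - 2)))

/-- The natural domain of h_p: all of ℝ when p = 2, and (−1,1) when p > 2. -/
def hDomain (p : ℝ) : Set ℝ := if p = 2 then Set.univ else Set.Ioo (-1) 1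

/-- The inverse h_p^{-1} : ℝ → ℝ of h_p (h_p is a strictly increasing bijection
from its domain onto ℝ). -/
def hInv (p u : ℝ) : ℝ := Function.invFunOn (hfun p) (hDomain p) u

/-- q_p(u) = ∫₀ᵘ h_p^{−1}(v) dv. -/
def qfun (p u : ℝ) : ℝ := ∫ v in (0:ℝ)..u, hInv p v

/-- Q_p(z) = α^p ∑ q_p(z i / α^p). -/
def Qfun {n : ℕ} (p α : ℝ) (z : Fin n → ℝ) : ℝ := α ^ p * ∑ i, qfun p (z i / α ^ p)

/-- g_p: g₂(u) = |u| ln(|u|/e) (with g₂(0) = 0), and for p > 2,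
g_p(u) = |u| − (p/2)|u|^{2/p}. -/
def gfun (p u : ℝ) : ℝ :=
  if p = 2 then (if u = 0 then 0 else |u| * Real.log (|u| / Real.exp 1))
  else |u| - p / 2 * |u| ^ (2 / p)

/-- G_p(z) = α^p ∑ g_p(z i / α^p). -/
def Gfun {n : ℕ} (p α : ℝ) (z : Fin n → ℝ) : ℝ := α ^ p * ∑ i, gfun p (z i / α ^ p)

/-- The predictor ψ_θ = θ₊^p − θ₋^p (componentwise powers), for a parameter vector
θ = (θ₊, θ₋) ∈ ℝ^{2N}. -/
def psiOf {N : ℕ} (p : ℝ) (θ : EuclideanSpace ℝ (Fin N ⊕ Fin N)) : Fin N → ℝ :=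
  fun i => θ (Sum.inl i) ^ p - θ (Sum.inr i) ^ p

/-- The squared loss L(θ) = (1/2)‖A ψ_θ − y‖₂². -/
def lossFun {m N : ℕ} (A : Matrix (Fin m) (Fin N) ℝ) (y : Fin m → ℝ) (p : ℝ)
    (θ : EuclideanSpace ℝ (Fin N ⊕ Fin N)) : ℝ :=
  (1 / 2) * ∑ j, (A.mulVec (psiOf p θ) j - y j) ^ 2

end
lemma hfun_two : hfun 2 = fun t => 2 * Real.sinh t := by
  funext t; simp [hfun]

lemma hInv_two_spec (u : ℝ) : 2 * Real.sinh (hInv 2 u) = u := by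
  have h : ∃ a ∈ hDomain 2, hfun 2 a = u := by
    refine ⟨Real.arsinh (u/2), by simp [hDomain], ?_⟩
    rw [hfun_two]; simp [Real.sinh_arsinh]; ring
  have h2 : hfun 2 (hInv 2 u) = u := Function.invFunOn_eq h
  rw [hfun_two] at h2
  exact h2

lemma deriv_hfun_two (t : ℝ) : deriv (hfun 2) t = 2 * Real.cosh t := by
  rw [hfun_two]
  rw [deriv_const_mul _ (Real.differentiable_sinh t)]
  simp [Real.deriv_sinh]

lemma hfun_gt {p : ℝ} (hp : p ≠ 2) :
    hfun p = fun t => (1 - t) ^ (-(p / (p - 2))) - (1 + t) ^ (-(p / (p - 2))) := by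
  funext t; simp [hfun, hp]

lemma superadd {x e : ℝ} (hx : 1 ≤ x) (he : 1 ≤ e) : x ^ e + 1 ≤ (x + 1) ^ e := by
  have hx0 : (0:ℝ) < x := lt_of_lt_of_le one_pos hx
  have h1 : x ^ (e-1) ≤ (x+1) ^ (e-1) := Real.rpow_le_rpow hx0.le (by linarith) (by linarith)
  have h2 : (1:ℝ) ≤ (x+1) ^ (e-1) := Real.one_le_rpow (by linarith) (by linarith)
  have h3 : (x+1) ^ e = (x+1) * (x+1) ^ (e-1) := by
    rw [← Real.rpow_one_add' (by positivity) (by intro h; linarith)]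
    ring_nf
  have h4 : x ^ e = x * x ^ (e-1) := by
    rw [← Real.rpow_one_add' hx0.le (by intro h; linarith)]
    ring_nf
  nlinarith [mul_le_mul_of_nonneg_left h1 hx0.le]

lemma hfun_surj {p : ℝ} (hp : 2 < p) (u : ℝ) :
    ∃ t ∈ Set.Ioo (-1:ℝ) 1, hfun p t = u := by
  have hβ : 1 ≤ p / (p - 2) := by
    rw [le_div_iff₀ (by linarith)]; linarith
  have hne : p ≠ 2 := by linarith
  set β : ℝ := p / (p - 2) with hβdef
  set a : ℝ := 1 - 1 / (|u| + 2) with ha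
  have hu2 : (0:ℝ) < |u| + 2 := by positivity
  have h1a : 0 < 1 - a := by rw [ha]; simp only [sub_sub_cancel]; positivity
  have ha1 : a < 1 := by linarith
  have ha0 : 0 ≤ a := by
    have : 1 / (|u| + 2) ≤ 1 := by rw [div_le_one hu2]; linarith [abs_nonneg u]
    rw [ha]; linarith
  -- continuity on Icc (-a) a
  have hcont : ContinuousOn (hfun p) (Set.Icc (-a) a) := by
    rw [hfun_gt hne]
    intro t ht
    obtain ⟨ht1, ht2⟩ := ht
    have hlt : 1 - t > 0 := by linarith
    have hgt : 1 + t > 0 := by linarith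
    apply ContinuousAt.continuousWithinAt
    apply ContinuousAt.sub
    · exact (Real.continuousAt_rpow_const _ _ (Or.inl hlt.ne')).comp
        ((continuous_const.sub continuous_id).continuousAt)
    · exact (Real.continuousAt_rpow_const _ _ (Or.inl hgt.ne')).comp
        ((continuous_const.add continuous_id).continuousAt)
  -- value bounds at endpoints
  have hval : ∀ t : ℝ, hfun p t = (1 - t) ^ (-β) - (1 + t) ^ (-β) := by
    intro t; rw [hfun_gt hne]
  have hia : (1 - a) ^ (-β) ≥ |u| + 2 := by
    have h1 : (1 - a) ^ (-(1:ℝ)) ≤ (1 - a) ^ (-β) :=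
      Real.rpow_le_rpow_of_exponent_ge h1a (by linarith) (by linarith)
    have h2 : (1 - a) ^ (-(1:ℝ)) = |u| + 2 := by
      rw [Real.rpow_neg_one]
      rw [ha]; simp only [sub_sub_cancel]
      rw [one_div, inv_inv]
    linarith
  have hja : (1 + a) ^ (-β) ≤ 1 :=
    Real.rpow_le_one_of_one_le_of_nonpos (by linarith) (by linarith)
  have hjb : 0 < (1 + a) ^ (-β) := Real.rpow_pos_of_pos (by linarith) _
  have hib : 0 < (1 - a) ^ (-β) := Real.rpow_pos_of_pos h1a _
  have haup : hfun p a ≥ u := by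
    rw [hval a]
    have := abs_le.mp (le_refl |u|) |>.2
    have h3 : |u| ≤ |u| := le_refl _
    nlinarith [le_abs_self u]
  have hadn : hfun p (-a) ≤ u := by
    rw [hval (-a)]
    simp only [sub_neg_eq_add, add_neg_cancel_comm]
    have h4 : 1 + -a = 1 - a := by ring
    rw [h4]
    nlinarith [neg_abs_le u]
  have hsub : Set.Icc (hfun p (-a)) (hfun p a) ⊆ hfun p '' Set.Icc (-a) a :=
    intermediate_value_Icc (by linarith) hcont
  obtain ⟨t, ht, htu⟩ := hsub ⟨hadn, haup⟩
  exact ⟨t, ⟨by cases ht; linarith, by cases ht; linarith⟩, htu⟩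

lemma hInv_spec_gt {p : ℝ} (hp : 2 < p) (u : ℝ) :
    hInv p u ∈ Set.Ioo (-1:ℝ) 1 ∧ hfun p (hInv p u) = u := by
  have hne : p ≠ 2 := by linarith
  have hdom : hDomain p = Set.Ioo (-1:ℝ) 1 := by simp [hDomain, hne]
  obtain ⟨t, ht, htu⟩ := hfun_surj hp u
  have hex : ∃ a ∈ hDomain p, hfun p a = u := ⟨t, by rw [hdom]; exact ht, htu⟩
  constructor
  · rw [← hdom]; exact Function.invFunOn_mem hex
  · exact Function.invFunOn_eq hex

lemma hasDerivAt_hfun_gt {p : ℝ} (hp : 2 < p) {t : ℝ} (ht : t ∈ Set.Ioo (-1:ℝ) 1) :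
    HasDerivAt (hfun p)
      (p / (p - 2) * ((1 - t) ^ (-(p / (p - 2)) - 1) + (1 + t) ^ (-(p / (p - 2)) - 1))) t := by
  have hne : p ≠ 2 := by linarith
  obtain ⟨ht1, ht2⟩ := ht
  have h1 : (0:ℝ) < 1 - t := by linarith
  have h2 : (0:ℝ) < 1 + t := by linarith
  rw [hfun_gt hne]
  set β : ℝ := p / (p - 2) with hβdef
  have d1 : HasDerivAt (fun t : ℝ => 1 - t) (-1) t := by
    simpa using (hasDerivAt_id t).const_sub 1
  have d2 : HasDerivAt (fun t : ℝ => 1 + t) 1 t := by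
    simpa using (hasDerivAt_id t).const_add 1
  have e1 : HasDerivAt (fun t : ℝ => (1 - t) ^ (-β)) ((-1) * (-β) * (1 - t) ^ (-β - 1)) t :=
    d1.rpow_const (Or.inl h1.ne')
  have e2 : HasDerivAt (fun t : ℝ => (1 + t) ^ (-β)) (1 * (-β) * (1 + t) ^ (-β - 1)) t :=
    d2.rpow_const (Or.inl h2.ne')
  have := e1.sub e2
  exact this.congr_deriv (by ring)

lemma key {p : ℝ} (hp : 2 ≤ p) :
    ∃ c : ℝ, 1 ≤ c ∧ ∀ u : ℝ, 2 * c ≤ deriv (hfun p) (hInv p u) ∧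
      deriv (hfun p) (hInv p u) ≤ c * (|u| + 2) ^ ((2 * p - 2) / p) := by
  rcases eq_or_lt_of_le hp with heq | hlt
  · -- p = 2
    subst heq
    refine ⟨1, le_refl 1, fun u => ⟨?_, ?_⟩⟩
    · rw [deriv_hfun_two]
      have := Real.one_le_cosh (hInv 2 u)
      linarith
    · rw [deriv_hfun_two]
      have hu : 2 * Real.sinh (hInv 2 u) = u := hInv_two_spec u
      have he : (2 * 2 - 2) / 2 = (1:ℝ) := by norm_num
      rw [he, Real.rpow_one, one_mul]
      set t := hInv 2 u
      have h1 : Real.cosh t ≤ |Real.sinh t| + 1 := by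
        nlinarith [Real.cosh_sq t, sq_abs (Real.sinh t), abs_nonneg (Real.sinh t),
          Real.cosh_pos t]
      have h2 : |u| = 2 * |Real.sinh t| := by
        rw [← hu, abs_mul]; norm_num
      linarith
  · -- p > 2
    have hne : p ≠ 2 := by linarith
    have hβ1 : 1 ≤ p / (p - 2) := by rw [le_div_iff₀ (by linarith)]; linarith
    set β : ℝ := p / (p - 2) with hβdef
    set e : ℝ := (2 * p - 2) / p with hedef
    have hp0 : (0:ℝ) < p := by linarith
    have he1 : 1 ≤ e := by rw [hedef, le_div_iff₀ hp0]; linarith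
    have hβe : β * e = β + 1 := by
      have h2n : p - 2 ≠ 0 := by linarith
      rw [hβdef, hedef]; field_simp; ring
    refine ⟨β, hβ1, fun u => ?_⟩
    obtain ⟨⟨ht1, ht2⟩, htu⟩ := hInv_spec_gt hlt u
    set t := hInv p u
    have h1 : (0:ℝ) < 1 - t := by linarith
    have h2 : (0:ℝ) < 1 + t := by linarith
    have hD : deriv (hfun p) t = β * ((1 - t) ^ (-β - 1) + (1 + t) ^ (-β - 1)) :=
      (hasDerivAt_hfun_gt hlt ⟨ht1, ht2⟩).deriv
    set A : ℝ := (1 - t) ^ (-β - 1) with hA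
    set B : ℝ := (1 + t) ^ (-β - 1) with hB
    have hApos : 0 < A := Real.rpow_pos_of_pos h1 _
    have hBpos : 0 < B := Real.rpow_pos_of_pos h2 _
    constructor
    · -- lower bound: A * B ≥ 1 hence A + B ≥ 2
      have hab : A * B = ((1 - t) * (1 + t)) ^ (-β - 1) :=
        (Real.mul_rpow h1.le h2.le).symm
      have hle1 : (1 - t) * (1 + t) ≤ 1 := by nlinarith [sq_nonneg t]
      have hpos : 0 < (1 - t) * (1 + t) := mul_pos h1 h2
      have h1ab : 1 ≤ A * B := by
        rw [hab]
        exact Real.one_le_rpow_of_pos_of_le_one_of_nonpos hpos hle1 (by linarith)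
      have hAB2 : 2 ≤ A + B := by nlinarith [sq_nonneg (A - B)]
      rw [hD]; nlinarith
    · -- upper bound
      rw [hD]
      have hu : (1 - t) ^ (-β) - (1 + t) ^ (-β) = u := by
        rw [← htu, hfun_gt hne]
      have main : A + B ≤ (|u| + 2) ^ e := by
        rcases le_or_gt 0 t with hts | hts
        · -- t ≥ 0 : s = 1 - t
          set x : ℝ := (1 - t) ^ (-β) with hx
          have hx1 : 1 ≤ x := Real.one_le_rpow_of_pos_of_le_one_of_nonpos h1 (by linarith) (by linarith)
          have hw : (1 + t) ^ (-β) ≤ 1 :=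
            Real.rpow_le_one_of_one_le_of_nonpos (by linarith) (by linarith)
          have hBu : B ≤ 1 :=
            Real.rpow_le_one_of_one_le_of_nonpos (by linarith) (by linarith)
          have hxu : x - 1 ≤ |u| := by
            have : x - 1 ≤ u := by rw [← hu]; linarith
            linarith [le_abs_self u]
          have hAx : A = x ^ e := by
            rw [hA, hx, ← Real.rpow_mul h1.le]
            congr 1
            rw [neg_mul, hβe]; ring
          have step1 : x ^ e + 1 ≤ (x + 1) ^ e := superadd hx1 he1
          have step2 : (x + 1) ^ e ≤ (|u| + 2) ^ e :=
            Real.rpow_le_rpow (by positivity) (by linarith) (by linarith)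
          rw [hAx]; linarith
        · -- t < 0 : s = 1 + t
          set x : ℝ := (1 + t) ^ (-β) with hx
          have hx1 : 1 ≤ x := Real.one_le_rpow_of_pos_of_le_one_of_nonpos h2 (by linarith) (by linarith)
          have hw : (1 - t) ^ (-β) ≤ 1 :=
            Real.rpow_le_one_of_one_le_of_nonpos (by linarith) (by linarith)
          have hAu : A ≤ 1 :=
            Real.rpow_le_one_of_one_le_of_nonpos (by linarith) (by linarith)
          have hxu : x - 1 ≤ |u| := by
            have : x - 1 ≤ -u := by rw [← hu]; linarith
            linarith [neg_abs_le u]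
          have hBx : B = x ^ e := by
            rw [hB, hx, ← Real.rpow_mul h2.le]
            congr 1
            rw [neg_mul, hβe]; ring
          have step1 : x ^ e + 1 ≤ (x + 1) ^ e := superadd hx1 he1
          have step2 : (x + 1) ^ e ≤ (|u| + 2) ^ e :=
            Real.rpow_le_rpow (by positivity) (by linarith) (by linarith)
          rw [hBx]; linarith
      calc β * (A + B) ≤ β * ((|u| + 2) ^ e) :=
            mul_le_mul_of_nonneg_left main (by linarith)
        _ = β * (|u| + 2) ^ e := rfl


/-- Lemma `kappa_bound`: the Hessian of Q_p at z, i.e. the diagonal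
matrix with i-th entry 1/(α^p h_p'(h_p^{−1}(z i/α^p))), is positive definite and its
condition number (largest diagonal entry over smallest diagonal entry) is at most
(1/2)(‖z‖_∞/α^p + 2)^{(2p−2)/p}. -/
theorem stmt7 (N : ℕ) (p α : ℝ) (hp : 2 ≤ p) (hα : 0 < α) (z : Fin N → ℝ) :
    (Matrix.diagonal fun i : Fin N =>
        1 / (α ^ p * deriv (hfun p) (hInv p (z i / α ^ p)))).PosDef ∧
    ∀ i j : Fin N,
      (1 / (α ^ p * deriv (hfun p) (hInv p (z i / α ^ p)))) /
        (1 / (α ^ p * deriv (hfun p) (hInv p (z j / α ^ p)))) ≤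
      (1 / 2) * (normInf z / α ^ p + 2) ^ ((2 * p - 2) / p) := by
  have hap : (0:ℝ) < α ^ p := Real.rpow_pos_of_pos hα p
  have hDpos : ∀ i : Fin N, 0 < deriv (hfun p) (hInv p (z i / α ^ p)) := by
    intro i
    obtain ⟨c, hc1, hk⟩ := key hp
    have := (hk (z i / α ^ p)).1
    linarith
  constructor
  · rw [Matrix.posDef_diagonal_iff]
    intro i
    exact div_pos one_pos (mul_pos hap (hDpos i))
  · intro i j
    obtain ⟨c, hc1, hk⟩ := key hp
    have hc3 := (hk (z j / α ^ p)).2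
    have hc2' := (hk (z i / α ^ p)).1
    set Di := deriv (hfun p) (hInv p (z i / α ^ p))
    set Dj := deriv (hfun p) (hInv p (z j / α ^ p))
    have hDi : 0 < Di := hDpos i
    have hDj : 0 < Dj := hDpos j
    have hratio : (1 / (α ^ p * Di)) / (1 / (α ^ p * Dj)) = Dj / Di := by
      field_simp
    rw [hratio]
    -- |z j / α^p| ≤ normInf z / α^p
    have habs : |z j / α ^ p| ≤ normInf z / α ^ p := by
      rw [abs_div, abs_of_pos hap]
      have hb : |z j| ≤ normInf z :=
        le_ciSup (Set.Finite.bddAbove (Set.finite_range fun i => |z i|)) j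
      gcongr
    have hM0 : 0 ≤ normInf z / α ^ p := le_trans (abs_nonneg _) habs
    have he0 : 0 ≤ (2 * p - 2) / p := div_nonneg (by linarith) (by linarith)
    have hmono : (|z j / α ^ p| + 2) ^ ((2 * p - 2) / p) ≤
        (normInf z / α ^ p + 2) ^ ((2 * p - 2) / p) :=
      Real.rpow_le_rpow (by positivity) (by linarith) he0
    have hupper : Dj ≤ c * (normInf z / α ^ p + 2) ^ ((2 * p - 2) / p) := by
      calc Dj ≤ c * (|z j / α ^ p| + 2) ^ ((2 * p - 2) / p) := hc3
        _ ≤ c * (normInf z / α ^ p + 2) ^ ((2 * p - 2) / p) :=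
          mul_le_mul_of_nonneg_left hmono (by linarith)
    have h2c : 2 * c ≤ Di := hc2'
    calc Dj / Di ≤ (c * (normInf z / α ^ p + 2) ^ ((2 * p - 2) / p)) / (2 * c) := by
          apply div_le_div₀ (by positivity) hupper (by linarith) h2c
      _ = (1 / 2) * (normInf z / α ^ p + 2) ^ ((2 * p - 2) / p) := by
          field_simp
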